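/- Let G be an arbitrary connected graph and R a finest RSP-relation on E(G). Then (τ ∪ δ₁)* ⊆ R ⊆ δ₀*, where * denotes transitive (equivalence) closure. Moreover, if G is K_{2,3}-free, then (τ ∪ δ₁)* = R = δ₀*. -/

import Mathlib

open SimpleGraph

variable {V : Type*}

/-- An equivalence relation on a set `E` of edges: reflexive on `E`, symmetric, transitive,
and only relating elements of `E`. -/
structure IsEquivOn (R : Sym2 V → Sym2 V → Prop) (E : Set (Sym2 V)) : Prop where
  refl : ∀ e ∈ E, R e e
  symm : ∀ {e f}, R e f → R f e
  trans : ∀ {e f g}, R e f → R f g → R e g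
  mem_left : ∀ {e f}, R e f → e ∈ E
  mem_right : ∀ {e f}, R e f → f ∈ E

/-- `R` is an RSP-relation on `G`: an equivalence relation on `E(G)` such that any two adjacent
edges in distinct classes span a square (4-cycle) with opposite edges in the same class. -/
def IsRSP (G : SimpleGraph V) (R : Sym2 V → Sym2 V → Prop) : Prop :=
  IsEquivOn R G.edgeSet ∧
  ∀ x y z : V, G.Adj x y → G.Adj x z → y ≠ z → ¬ R s(x, y) s(x, z) →
    ∃ w : V, w ≠ x ∧ w ≠ y ∧ w ≠ z ∧ G.Adj y w ∧ G.Adj z w ∧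
      R s(x, y) s(z, w) ∧ R s(x, z) s(y, w)

/-- A finest RSP-relation: an RSP-relation such that every finer RSP-relation coincides
with it. -/
def IsFinestRSP (G : SimpleGraph V) (R : Sym2 V → Sym2 V → Prop) : Prop :=
  IsRSP G R ∧ ∀ S : Sym2 V → Sym2 V → Prop, IsRSP G S →
    (∀ e f, S e f → R e f) → (∀ e f, R e f → S e f)

/-- `a-b-c-d` is a square (4-cycle on distinct vertices) in `G`. -/
def SquareIn (G : SimpleGraph V) (a b c d : V) : Prop :=
  a ≠ c ∧ b ≠ d ∧ G.Adj a b ∧ G.Adj b c ∧ G.Adj c d ∧ G.Adj d a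

/-- `e` and `f` are opposite edges of some square of `G`. -/
def OppSq (G : SimpleGraph V) (e f : Sym2 V) : Prop :=
  ∃ a b c d : V, SquareIn G a b c d ∧ e = s(a, b) ∧ f = s(c, d)

/-- The relation `τ`: `e = [x,z]` and `f = [z,y]` with `z` the unique common neighbor of
`x` and `y` (equivalently: adjacent edges lying on no common square). -/
def TauRel (G : SimpleGraph V) (e f : Sym2 V) : Prop :=
  ∃ x z y : V, e = s(x, z) ∧ f = s(z, y) ∧ G.Adj x z ∧ G.Adj z y ∧ x ≠ y ∧
    ∀ w : V, G.Adj x w → G.Adj y w → w = z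

/-- The relation `δ₀`. -/
def Delta0 (G : SimpleGraph V) (e f : Sym2 V) : Prop :=
  OppSq G e f ∨ TauRel G e f ∨ (e = f ∧ e ∈ G.edgeSet)

/-- `G` contains no subgraph isomorphic to `K_{2,3}`. -/
def K23Free (G : SimpleGraph V) : Prop :=
  ¬ ∃ x y a b c : V, x ≠ y ∧ a ≠ b ∧ a ≠ c ∧ b ≠ c ∧
    G.Adj x a ∧ G.Adj x b ∧ G.Adj x c ∧ G.Adj y a ∧ G.Adj y b ∧ G.Adj y c

/-- The square `a-b-c-d` is contained in some `K_{2,3}`-subgraph of `G`. -/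
def SquareInK23 (G : SimpleGraph V) (a b c d : V) : Prop :=
  (∃ w : V, w ≠ b ∧ w ≠ d ∧ G.Adj a w ∧ G.Adj c w) ∨
  (∃ w : V, w ≠ a ∧ w ≠ c ∧ G.Adj b w ∧ G.Adj d w)

/-- The relation `δ₁`: equal edges, or opposite edges of a square not contained in any
`K_{2,3}`-subgraph. -/
def Delta1 (G : SimpleGraph V) (e f : Sym2 V) : Prop :=
  (e = f ∧ e ∈ G.edgeSet) ∨
  ∃ a b c d : V, SquareIn G a b c d ∧ ¬ SquareInK23 G a b c d ∧ e = s(a, b) ∧ f = s(c, d)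

section Aux

variable {G : SimpleGraph V} {R : Sym2 V → Sym2 V → Prop}

private lemma es (a b : V) : (s(a,b) : Sym2 V) = s(b,a) := Sym2.eq_swap

private lemma squareIn_rev {a b c d : V} (h : SquareIn G a b c d) : SquareIn G c d a b :=
  ⟨h.1.symm, h.2.1.symm, h.2.2.2.2.1, h.2.2.2.2.2, h.2.2.1, h.2.2.2.1⟩

private lemma delta0_symm : Symmetric (Delta0 G) := by
  rintro e f (⟨a,b,c,d,sq,he,hf⟩ | ⟨x,z,y,he,hf,h1,h2,h3,h4⟩ | ⟨rfl, hm⟩)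
  · exact Or.inl ⟨c, d, a, b, squareIn_rev sq, hf, he⟩
  · exact Or.inr (Or.inl ⟨y, z, x, hf.trans (es z y), he.trans (es x z), h2.symm, h1.symm,
      h3.symm, fun w hw1 hw2 => h4 w hw2 hw1⟩)
  · exact Or.inr (Or.inr ⟨rfl, hm⟩)

private lemma inter_isRSP (hR : IsRSP G R) :
    IsRSP G (fun e f => R e f ∧ Relation.TransGen (Delta0 G) e f) := by
  obtain ⟨hE, hsq⟩ := hR
  have tsymm : Symmetric (Relation.TransGen (Delta0 G)) := by
    intro a b h
    induction h with
    | single h => exact Relation.TransGen.single (delta0_symm h)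
    | tail _ h ih => exact Relation.TransGen.head (delta0_symm h) ih
  refine ⟨⟨fun e he => ⟨hE.refl e he, Relation.TransGen.single (Or.inr (Or.inr ⟨rfl, he⟩))⟩,
    fun h => ⟨hE.symm h.1, tsymm h.2⟩,
    fun h h' => ⟨hE.trans h.1 h'.1, h.2.trans h'.2⟩,
    fun h => hE.mem_left h.1, fun h => hE.mem_right h.1⟩, ?_⟩
  intro x y z hxy hxz hyz hS
  by_cases hr : R s(x,y) s(x,z)
  · have htg : ¬ Relation.TransGen (Delta0 G) s(x,y) s(x,z) := fun h => hS ⟨hr, h⟩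
    have hw : ∃ w, w ≠ x ∧ G.Adj y w ∧ G.Adj z w := by
      by_contra hcon
      push_neg at hcon
      apply htg
      exact Relation.TransGen.single (Or.inr (Or.inl ⟨y, x, z, es x y, rfl, hxy.symm, hxz, hyz,
        fun w h1 h2 => by by_contra hne; exact hcon w hne h1 h2⟩))
    obtain ⟨w, hwx, hyw, hzw⟩ := hw
    have key : ∀ y' z' : V, G.Adj x y' → G.Adj x z' → y' ≠ z' →
        ¬ Relation.TransGen (Delta0 G) s(x,y') s(x,z') →
        G.Adj y' w → G.Adj z' w →
        R s(y',x) s(y',w) ∨ (R s(x,y') s(z',w) ∧ R s(x,z') s(y',w)) := by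
      intro y' z' hxy' hxz' hyz' htg' hyw' hzw'
      by_cases hL : R s(y',x) s(y',w)
      · exact Or.inl hL
      · obtain ⟨u, huy, hux, huw, hxu, hwu, hr1, hr2⟩ :=
          hsq y' x w hxy'.symm hyw' hwx.symm hL
        by_cases huz : u = z'
        · subst huz
          refine Or.inr ⟨?_, hE.symm hr2⟩
          rw [es x y', es u w]
          exact hr1
        · exfalso
          apply htg'
          have d1 : Delta0 G s(y',x) s(u,w) :=
            Or.inl ⟨y', x, u, w, ⟨huy.symm, hwx.symm, hxy'.symm, hxu, hwu.symm, hyw'.symm⟩,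
              rfl, rfl⟩
          have d2 : Delta0 G s(z',x) s(u,w) :=
            Or.inl ⟨z', x, u, w, ⟨Ne.symm huz, hwx.symm, hxz'.symm, hxu, hwu.symm, hzw'.symm⟩,
              rfl, rfl⟩
          rw [es x y', es x z']
          exact Relation.TransGen.head d1 (Relation.TransGen.single (delta0_symm d2))
    have hy := key y z hxy hxz hyz htg hyw hzw
    have hz := key z y hxz hxy hyz.symm (fun h => htg (tsymm h)) hzw hyw
    have PQ : R s(x,y) s(z,w) ∧ R s(x,z) s(y,w) := by
      rcases hy with hy | hy
      · rcases hz with hz | hz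
        · constructor
          · refine hE.trans hr ?_
            rw [es x z]; exact hz
          · refine hE.trans (hE.symm hr) ?_
            rw [es x y]; exact hy
        · exact ⟨hz.2, hz.1⟩
      · exact hy
    refine ⟨w, hwx, hyw.ne', hzw.ne', hyw, hzw, ⟨PQ.1, ?_⟩, PQ.2, ?_⟩
    · rw [es z w]
      exact Relation.TransGen.single (Or.inl ⟨x, y, w, z,
        ⟨hwx.symm, hyz, hxy, hyw, hzw.symm, hxz.symm⟩, rfl, rfl⟩)
    · rw [es y w]
      exact Relation.TransGen.single (Or.inl ⟨x, z, w, y,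
        ⟨hwx.symm, hyz.symm, hxz, hzw, hyw.symm, hxy.symm⟩, rfl, rfl⟩)
  · obtain ⟨w, hwx, hwy, hwz, hyw, hzw, hr1, hr2⟩ := hsq x y z hxy hxz hyz hr
    refine ⟨w, hwx, hwy, hwz, hyw, hzw, ⟨hr1, ?_⟩, hr2, ?_⟩
    · rw [es z w]
      exact Relation.TransGen.single (Or.inl ⟨x, y, w, z,
        ⟨hwx.symm, hyz, hxy, hyw, hzw.symm, hxz.symm⟩, rfl, rfl⟩)
    · rw [es y w]
      exact Relation.TransGen.single (Or.inl ⟨x, z, w, y,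
        ⟨hwx.symm, hyz.symm, hxz, hzw, hyw.symm, hxy.symm⟩, rfl, rfl⟩)

private lemma tau_sub (hR : IsRSP G R) {e f : Sym2 V} (h : TauRel G e f) : R e f := by
  obtain ⟨hE, hsq⟩ := hR
  obtain ⟨x, z, y, rfl, rfl, hxz, hzy, hxy, hu⟩ := h
  by_contra hn
  have hn' : ¬ R s(z,x) s(z,y) := by rw [es z x]; exact hn
  obtain ⟨w, hwz, hwx, hwy, hxw, hyw, _, _⟩ := hsq z x y hxz.symm hzy hxy hn'
  exact hwz (hu w hxw hyw)

private lemma delta1_sub (hR : IsRSP G R) {e f : Sym2 V} (h : Delta1 G e f) : R e f := by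
  obtain ⟨hE, hsq⟩ := hR
  rcases h with ⟨rfl, hm⟩ | ⟨a, b, c, d, ⟨hac, hbd, hab, hbc, hcd, hda⟩, hK, rfl, rfl⟩
  · exact hE.refl _ hm
  by_cases h1 : R s(b,a) s(b,c)
  · by_cases h2 : R s(a,b) s(a,d)
    · by_cases h3 : R s(c,b) s(c,d)
      · have h1' : R s(a,b) s(c,b) := by rw [es a b, es c b]; exact h1
        exact hE.trans h1' h3
      · obtain ⟨w, hwc, hwb, hwd, hbw, hdw, hr1, hr2⟩ := hsq c b d hbc.symm hcd hbd h3
        have hwa : w = a := by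
          by_contra hwa
          exact hK (Or.inr ⟨w, hwa, hwc, hbw, hdw⟩)
        rw [es a b, ← hwa]
        exact hE.symm hr2
    · obtain ⟨w, hwa, hwb, hwd, hbw, hdw, hr1, hr2⟩ := hsq a b d hab hda.symm hbd h2
      have hwc : w = c := by
        by_contra hwc
        exact hK (Or.inr ⟨w, hwa, hwc, hbw, hdw⟩)
      rw [es c d, ← hwc]
      exact hr1
  · obtain ⟨w, hwb, hwa, hwc, haw, hcw, hr1, hr2⟩ := hsq b a c hab.symm hbc hac h1
    have hwd : w = d := by
      by_contra hwd
      exact hK (Or.inl ⟨w, hwb, hwd, haw, hcw⟩)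
    rw [es a b, ← hwd]
    exact hr1

private lemma delta0_sub_of_k23free (hfree : K23Free G) {e f : Sym2 V} (h : Delta0 G e f) :
    TauRel G e f ∨ Delta1 G e f := by
  rcases h with ⟨a,b,c,d,sq,he,hf⟩ | ht | heq
  · refine Or.inr (Or.inr ⟨a, b, c, d, sq, ?_, he, hf⟩)
    obtain ⟨hac, hbd, hab, hbc, hcd, hda⟩ := sq
    rintro (⟨w,hwb,hwd,haw,hcw⟩ | ⟨w,hwa,hwc,hbw,hdw⟩)
    · exact hfree ⟨a, c, b, d, w, hac, hbd, hwb.symm, hwd.symm, hab, hda.symm, haw,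
        hbc.symm, hcd, hcw⟩
    · exact hfree ⟨b, d, a, c, w, hbd, hac, hwa.symm, hwc.symm, hab.symm, hbc, hbw,
        hda, hcd.symm, hdw⟩
  · exact Or.inl ht
  · exact Or.inr (Or.inl heq)

end Aux

/-- Every finest RSP-relation `R` on a connected graph satisfies
`(τ ∪ δ₁)* ⊆ R ⊆ δ₀*`; if moreover `G` is `K_{2,3}`-free, all three coincide. -/
theorem stmt4 (G : SimpleGraph V) (hG : G.Connected)
    (R : Sym2 V → Sym2 V → Prop) (hR : IsFinestRSP G R) :
    (∀ e f, Relation.TransGen (fun a b => TauRel G a b ∨ Delta1 G a b) e f → R e f) ∧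
    (∀ e f, R e f → Relation.TransGen (Delta0 G) e f) ∧
    (K23Free G → ∀ e f,
      (R e f ↔ Relation.TransGen (fun a b => TauRel G a b ∨ Delta1 G a b) e f) ∧
      (R e f ↔ Relation.TransGen (Delta0 G) e f)) := by
  obtain ⟨hRSP, hfin⟩ := hR
  have hE := hRSP.1
  have base : ∀ a b : Sym2 V, (TauRel G a b ∨ Delta1 G a b) → R a b := fun a b h =>
    h.elim (tau_sub hRSP) (delta1_sub hRSP)
  have part1 : ∀ e f, Relation.TransGen (fun a b => TauRel G a b ∨ Delta1 G a b) e f → R e f := by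
    intro e f h
    induction h with
    | single h => exact base _ _ h
    | tail _ h ih => exact hE.trans ih (base _ _ h)
  have hsub := hfin _ (inter_isRSP hRSP) (fun e f h => h.1)
  have part2 : ∀ e f, R e f → Relation.TransGen (Delta0 G) e f := fun e f h => (hsub e f h).2
  refine ⟨part1, part2, fun hfree e f => ?_⟩
  have mono : ∀ {e f : Sym2 V}, Relation.TransGen (Delta0 G) e f →
      Relation.TransGen (fun a b => TauRel G a b ∨ Delta1 G a b) e f :=
    fun h => Relation.TransGen.mono (r := Delta0 G) (fun a b hab => delta0_sub_of_k23free hfree hab) _ _ h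
  exact ⟨⟨fun h => mono (part2 e f h), part1 e f⟩, ⟨part2 e f, fun h => part1 e f (mono h)⟩⟩
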